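/- Let a > 0, Q⁰ > 0, and define the sequence Q^t by the recursion Q^t = Q^{t−1} + a (Q^{t−1})² for t ≥ 1. If T is a natural number with a Q⁰ T < 1, then for every t = 0, 1, …, T one has Q^t ≤ Q⁰ / (1 − a Q⁰ t). Moreover, if a Q⁰ T ≤ 5/6, then Q^T ≤ (1 + 6 a Q⁰ T) Q⁰. -/

import Mathlib

/-- Discrete Bihari–LaSalle inequality: if `Q⁰ > 0`, `a > 0` and
`Q^t = Q^{t-1} + a (Q^{t-1})²`, then as long as `a Q⁰ T < 1` one has
`Q^t ≤ Q⁰/(1 - a Q⁰ t)` for all `t ≤ T`; moreover if `a Q⁰ T ≤ 5/6` then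
`Q^T ≤ (1 + 6 a Q⁰ T) Q⁰`. -/
theorem discrete_bihari_lasalle (a Q0 : ℝ) (ha : 0 < a) (hQ0 : 0 < Q0)
    (Q : ℕ → ℝ) (h0 : Q 0 = Q0) (hrec : ∀ t, Q (t + 1) = Q t + a * Q t ^ 2) (T : ℕ) :
    (a * Q0 * T < 1 → ∀ t ≤ T, Q t ≤ Q0 / (1 - a * Q0 * t)) ∧
    (a * Q0 * T ≤ 5 / 6 → Q T ≤ (1 + 6 * a * Q0 * T) * Q0) := by
  have haQ : 0 < a * Q0 := mul_pos ha hQ0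
  have hQpos : ∀ t, 0 < Q t := by
    intro t
    induction t with
    | zero => rw [h0]; exact hQ0
    | succ n ih => rw [hrec]; positivity
  have main : a * Q0 * T < 1 → ∀ t ≤ T, Q t ≤ Q0 / (1 - a * Q0 * t) := by
    intro hT t ht
    induction t with
    | zero => simp [h0]
    | succ n ih =>
      have hn : n ≤ T := Nat.le_of_succ_le ht
      have ihn := ih hn
      have hstep : a * Q0 * ((n : ℝ) + 1) < 1 := by
        have : a * Q0 * ((n : ℝ) + 1) ≤ a * Q0 * T := by
          apply mul_le_mul_of_nonneg_left _ (le_of_lt haQ)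
          exact_mod_cast ht
        linarith
      have hv : 0 < 1 - a * Q0 * ((n : ℝ) + 1) := by linarith
      have hu : 0 < 1 - a * Q0 * (n : ℝ) := by nlinarith
      have hQn := hQpos n
      have hfn : Q n ≤ Q0 / (1 - a * Q0 * n) := ihn
      have hfnpos : 0 < Q0 / (1 - a * Q0 * (n : ℝ)) := by positivity
      have key : Q n + a * Q n ^ 2 ≤
          Q0 / (1 - a * Q0 * n) + a * (Q0 / (1 - a * Q0 * n)) ^ 2 := by
        have hsq : Q n ^ 2 ≤ (Q0 / (1 - a * Q0 * (n : ℝ))) ^ 2 := by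
          have := mul_le_mul hfn hfn hQn.le hfnpos.le
          nlinarith [this]
        nlinarith [mul_le_mul_of_nonneg_left hsq ha.le]
      rw [hrec]
      refine key.trans ?_
      have e : Q0 / (1 - a * Q0 * (n : ℝ)) + a * (Q0 / (1 - a * Q0 * (n : ℝ))) ^ 2 =
          (Q0 * (1 - a * Q0 * (n : ℝ)) + a * Q0 ^ 2) / (1 - a * Q0 * (n : ℝ)) ^ 2 := by
        field_simp
      have hcast : ((n + 1 : ℕ) : ℝ) = (n : ℝ) + 1 := by push_cast; ring
      rw [e, hcast, div_le_div_iff₀ (by positivity) hv]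
      nlinarith [sq_nonneg (a * Q0), hu, hv]
  refine ⟨main, ?_⟩
  intro hT
  have hT1 : a * Q0 * T < 1 := lt_of_le_of_lt hT (by norm_num)
  have h1 := main hT1 T le_rfl
  have hx : 0 ≤ a * Q0 * (T : ℝ) := by positivity
  have hv : 0 < 1 - a * Q0 * (T : ℝ) := by linarith
  refine h1.trans ?_
  rw [div_le_iff₀ hv]
  have h56 : (0:ℝ) ≤ 5 / 6 - a * Q0 * T := by linarith
  nlinarith [mul_nonneg (mul_nonneg hx h56) hQ0.le]
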